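/- Let M = (W,R,V) be a model, s a propositional variable, and w ∈ W a world such that M,w ⊨ ¬s ∧ @_s⊤ ∧ @_{◇s}s (under ML(DD) semantics). Then there is exactly one world w_s ∈ W with M,w_s ⊨ s; moreover w_s ≠ w, and for every v ∈ W with (v,w_s) ∈ R it holds that v = w_s (i.e., the s-world is accessible only from itself). -/
import Mathlib


/-- ML(DD)-formulas over propositional variables indexed by ℕ. -/
inductive MLDD : Type
  | prop : ℕ → MLDD
  | neg : MLDD → MLDD
  | or : MLDD → MLDD → MLDD
  | dia : MLDD → MLDD
  | dd : MLDD → MLDD → MLDD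

/-- A Kripke model. -/
structure Model where
  W : Type
  ne : Nonempty W
  R : W → W → Prop
  V : ℕ → W → Prop

/-- Satisfaction relation for ML(DD). -/
def sat (M : Model) : M.W → MLDD → Prop
  | w, .prop p => M.V p w
  | w, .neg φ => ¬ sat M w φ
  | w, .or φ ψ => sat M w φ ∨ sat M w ψ
  | w, .dia φ => ∃ v, M.R w v ∧ sat M v φ
  | _, .dd φ ψ => ∃ v, sat M v φ ∧ sat M v ψ ∧ ∀ v', v' ≠ v → ¬ sat M v' φ

/-- Conjunction, as the usual abbreviation. -/
def mand (φ ψ : MLDD) : MLDD := .neg (.or (.neg φ) (.neg ψ))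

/-- ⊤, as a tautology (s ∨ ¬s). -/
def mtop (s : ℕ) : MLDD := .or (.prop s) (.neg (.prop s))

/-- If `M,w ⊨ ¬s ∧ @_s⊤ ∧ @_{◇s}s`, then there is exactly one world `w_s` satisfying `s`;
moreover `w_s ≠ w` and `w_s` is accessible only from itself. -/
theorem trash_world (M : Model) (s : ℕ) (w : M.W)
    (h : sat M w (mand (.neg (.prop s))
      (mand (.dd (.prop s) (mtop s)) (.dd (.dia (.prop s)) (.prop s))))) :
    ∃ ws : M.W, M.V s ws ∧ (∀ v : M.W, M.V s v → v = ws) ∧ ws ≠ w ∧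
      (∀ v : M.W, M.R v ws → v = ws) := by
  simp only [mand, mtop, sat, not_or, not_not] at h
  obtain ⟨hw, ⟨ws, hws, -, hwsu⟩, ⟨u, ⟨v0, hR0, hv0⟩, hus, huu⟩⟩ := h
  have hu : u = ws := by
    by_contra hne; exact hwsu u hne hus
  refine ⟨ws, hws, ?_, ?_, ?_⟩
  · intro v hv; by_contra hne; exact hwsu v hne hv
  · rintro rfl; exact hw hws
  · intro v hRv
    have : v = u := by
      by_contra hne
      exact huu v hne ⟨ws, hRv, hws⟩
    rw [this, hu]
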